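/- If 0 < A < Σ_{i=1}^k β_{2i}, then every positive solution of x_n = (Σ_{i=1}^k β_{2i} x_{n-2i} + x_{n-ℓ})/(A + x_{n-ℓ}) satisfies x_n > 1 for all sufficiently large n. -/
import Mathlib


/-- If `0 < A < ∑ β_{2i}`, every positive solution of
`xₙ = (∑ β_{2i} x_{n-2i} + x_{n-ℓ})/(A + x_{n-ℓ})` satisfies `xₙ > 1` for all
sufficiently large `n`. -/
theorem eventually_greater_than_one (k ℓ : ℕ) (hk : 1 ≤ k) (hℓodd : Odd ℓ)
    (hℓ1 : 1 ≤ ℓ) (hℓ2 : ℓ ≤ 2 * k) (A : ℝ) (β : ℕ → ℝ)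
    (hβ : ∀ i, 0 ≤ β i) (hA : 0 < A)
    (hsumA : A < ∑ i ∈ Finset.Icc 1 k, β i)
    (x : ℤ → ℝ) (hx0 : ∀ n : ℤ, n ≤ 0 → 0 < x n)
    (hrec : ∀ n : ℤ, 1 ≤ n → x n =
      ((∑ i ∈ Finset.Icc 1 k, β i * x (n - 2 * (i : ℤ))) + x (n - (ℓ : ℤ))) /
      (A + x (n - (ℓ : ℤ)))) :
    ∃ N : ℤ, ∀ n : ℤ, N ≤ n → 1 < x n := by
  set B : ℝ := ∑ i ∈ Finset.Icc 1 k, β i with hBdef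
  have hB0 : 0 < B := lt_trans hA hsumA
  have hBA : 1 < B / A := (one_lt_div hA).mpr hsumA
  have hk' : (1 : ℤ) ≤ (k : ℤ) := by exact_mod_cast hk
  have hℓ1' : (1 : ℤ) ≤ (ℓ : ℤ) := by exact_mod_cast hℓ1
  have hℓ2' : (ℓ : ℤ) ≤ 2 * (k : ℤ) := by exact_mod_cast hℓ2
  have hne : (Finset.Icc (1 - 2 * (k : ℤ)) 0).Nonempty := by
    refine Finset.nonempty_Icc.mpr (by linarith)
  set c : ℝ := min 1 ((Finset.Icc (1 - 2 * (k : ℤ)) 0).inf' hne x) with hcdef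
  have hc1 : c ≤ 1 := min_le_left _ _
  have hc0 : 0 < c := by
    refine lt_min one_pos ?_
    rw [Finset.lt_inf'_iff]
    intro j hj
    exact hx0 j (Finset.mem_Icc.mp hj).2
  -- key step via mediant inequality
  have step : ∀ d : ℝ, 0 < d → ∀ n : ℤ, 1 ≤ n →
      (∀ m : ℤ, n - 2 * (k : ℤ) ≤ m → m ≤ n - 1 → d ≤ x m) →
      min ((B / A) * d) 1 ≤ x n := by
    intro d hd n hn hpast
    have hy : d ≤ x (n - (ℓ : ℤ)) := hpast _ (by linarith) (by linarith)
    have hy0 : 0 < x (n - (ℓ : ℤ)) := lt_of_lt_of_le hd hy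
    have hS : B * d ≤ ∑ i ∈ Finset.Icc 1 k, β i * x (n - 2 * (i : ℤ)) := by
      rw [hBdef, Finset.sum_mul]
      refine Finset.sum_le_sum fun i hi => ?_
      have hi' := Finset.mem_Icc.mp hi
      have h1 : (1 : ℤ) ≤ (i : ℤ) := by exact_mod_cast hi'.1
      have h2 : (i : ℤ) ≤ (k : ℤ) := by exact_mod_cast hi'.2
      exact mul_le_mul_of_nonneg_left (hpast _ (by linarith) (by linarith)) (hβ i)
    set S := ∑ i ∈ Finset.Icc 1 k, β i * x (n - 2 * (i : ℤ)) with hSdef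
    have hd1 : 0 < A + x (n - (ℓ : ℤ)) := by linarith
    rw [hrec n hn]
    rcases le_or_gt S A with hSA | hAS
    · have h1 : S / A ≤ (S + x (n - (ℓ : ℤ))) / (A + x (n - (ℓ : ℤ))) := by
        rw [div_le_div_iff₀ hA hd1]
        nlinarith
      calc min ((B / A) * d) 1 ≤ (B / A) * d := min_le_left _ _
        _ = B * d / A := by ring
        _ ≤ S / A := by gcongr
        _ ≤ _ := h1
    · refine le_trans (min_le_right _ _) ?_
      rw [le_div_iff₀ hd1]
      linarith
  -- uniform lower bound c
  have lower : ∀ n : ℤ, 1 - 2 * (k : ℤ) ≤ n → c ≤ x n := by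
    have key : ∀ m : ℕ, ∀ n : ℤ, 1 - 2 * (k : ℤ) ≤ n → n ≤ (m : ℤ) → c ≤ x n := by
      intro m
      induction m with
      | zero =>
        intro n h1 h2
        refine le_trans (min_le_right _ _) (Finset.inf'_le x ?_)
        exact Finset.mem_Icc.mpr ⟨h1, by exact_mod_cast h2⟩
      | succ m ih =>
        intro n h1 h2
        rcases le_or_gt n (m : ℤ) with h | h
        · exact ih n h1 h
        · have hn1 : 1 ≤ n := by omega
          have hst := step c hc0 n hn1 (fun p hp1 hp2 => ih p (by linarith) (by omega))
          refine le_trans ?_ hst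
          have : c ≤ (B / A) * c := le_mul_of_one_le_left hc0.le hBA.le
          exact le_min this hc1
    intro n h1
    exact key n.toNat n h1 (Int.self_le_toNat n)
  -- iterated improvement
  have iter : ∀ j : ℕ, ∀ n : ℤ, 1 - 2 * (k : ℤ) + 2 * (k : ℤ) * (j : ℤ) ≤ n →
      min ((B / A) ^ j * c) 1 ≤ x n := by
    intro j
    induction j with
    | zero =>
      intro n hn
      simp only [pow_zero, one_mul, Nat.cast_zero, mul_zero, add_zero] at *
      rw [min_eq_left hc1]
      exact lower n hn
    | succ j ih =>
      intro n hn
      have hkj : (0 : ℤ) ≤ 2 * (k : ℤ) * (j : ℤ) := by positivity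
      have hn1 : 1 ≤ n := by push_cast at hn; linarith
      set d := min ((B / A) ^ j * c) 1 with hddef
      have hd0 : 0 < d := lt_min (by positivity) one_pos
      have hp : ∀ m : ℤ, n - 2 * (k : ℤ) ≤ m → m ≤ n - 1 → d ≤ x m := by
        intro m h1 h2
        refine ih m ?_
        push_cast at hn ⊢
        linarith
      refine le_trans ?_ (step d hd0 n hn1 hp)
      refine le_min ?_ (min_le_right _ _)
      rcases le_total ((B / A) ^ j * c) 1 with h | h
      · have hde : d = (B / A) ^ j * c := min_eq_left h
        rw [hde]
        calc min ((B / A) ^ (j + 1) * c) 1 ≤ (B / A) ^ (j + 1) * c := min_le_left _ _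
          _ = (B / A) * ((B / A) ^ j * c) := by ring
      · have hde : d = 1 := min_eq_right h
        rw [hde, mul_one]
        exact le_trans (min_le_right _ _) hBA.le
  -- boost to 1
  obtain ⟨J, hJ⟩ := pow_unbounded_of_one_lt (1 / c) hBA
  have hJ1 : 1 ≤ (B / A) ^ J * c := by
    rw [div_lt_iff₀ hc0] at hJ
    linarith
  have hone : ∀ n : ℤ, 1 - 2 * (k : ℤ) + 2 * (k : ℤ) * (J : ℤ) ≤ n → 1 ≤ x n := by
    intro n hn
    have := iter J n hn
    rwa [min_eq_right hJ1] at this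
  -- conclusion
  refine ⟨max 1 (1 - 2 * (k : ℤ) + 2 * (k : ℤ) * (J : ℤ) + 2 * (k : ℤ)), fun n hn => ?_⟩
  have hn1 : 1 ≤ n := le_trans (le_max_left _ _) hn
  have hn2 : 1 - 2 * (k : ℤ) + 2 * (k : ℤ) * (J : ℤ) + 2 * (k : ℤ) ≤ n :=
    le_trans (le_max_right _ _) hn
  have hy : 1 ≤ x (n - (ℓ : ℤ)) := hone _ (by linarith)
  have hS : B ≤ ∑ i ∈ Finset.Icc 1 k, β i * x (n - 2 * (i : ℤ)) := by
    rw [hBdef]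
    refine Finset.sum_le_sum fun i hi => ?_
    have hi' := Finset.mem_Icc.mp hi
    have h2 : (i : ℤ) ≤ (k : ℤ) := by exact_mod_cast hi'.2
    have := hone (n - 2 * (i : ℤ)) (by linarith)
    nlinarith [hβ i]
  rw [hrec n hn1]
  rw [lt_div_iff₀ (by linarith)]
  linarith
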